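/- Let A be a commutative ring, I ⊆ A an ideal, and f : A → B a flat ring homomorphism. Then the natural map (Iⁿ/Iⁿ⁺¹) ⊗_A B → (IB)ⁿ/(IB)ⁿ⁺¹ is an isomorphism for every n ≥ 0; consequently the associated graded ring of B with respect to IB is the base change gr_I(A) ⊗_A B. -/

import Mathlib

open TensorProduct

noncomputable section

/-- The subquotient Iⁿ/Iⁿ⁺¹ as an A-module. -/
abbrev powQuot {A : Type*} [CommRing A] (I : Ideal A) (n : ℕ) : Type _ :=
  ↥(I ^ n) ⧸ (Submodule.comap (I ^ n : Ideal A).subtype (I ^ (n + 1) : Ideal A))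

/-- The subquotient Jⁿ/Jⁿ⁺¹ of an ideal of an A-algebra B, as an A-module. -/
abbrev powQuotRS (A : Type*) {B : Type*} [CommRing A] [CommRing B] [Algebra A B]
    (J : Ideal B) (n : ℕ) : Type _ :=
  ↥(Submodule.restrictScalars A (J ^ n : Ideal B)) ⧸
    (Submodule.comap (Submodule.restrictScalars A (J ^ n : Ideal B)).subtype
      (Submodule.restrictScalars A (J ^ (n + 1) : Ideal B)))

lemma mem_restrict_pow_of_mem_pow {A B : Type*} [CommRing A] [CommRing B]
    [Algebra A B] (I : Ideal A) (n : ℕ) (x : A) (hx : x ∈ I ^ n) (b : B) :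
    algebraMap A B x * b
      ∈ Submodule.restrictScalars A ((I.map (algebraMap A B)) ^ n : Ideal B) := by
  have h1 : algebraMap A B x ∈ (I.map (algebraMap A B)) ^ n := by
    rw [← Ideal.map_pow]
    exact Ideal.mem_map_of_mem _ hx
  simpa using Ideal.mul_mem_right b _ h1

section Aux

variable {A B : Type*} [CommRing A] [CommRing B] [Algebra A B]

/-- The map (I^m) ⊗ B → B, x ⊗ b ↦ alg(x) * b. -/
def phi (I : Ideal A) (m : ℕ) : (↥(I ^ m)) ⊗[A] B →ₗ[A] B :=
  (TensorProduct.lid A B).toLinearMap ∘ₗ LinearMap.rTensor B (I ^ m : Ideal A).subtype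

@[simp] lemma phi_tmul (I : Ideal A) (m : ℕ) (x : ↥(I ^ m)) (b : B) :
    phi I m (x ⊗ₜ[A] b) = algebraMap A B x.1 * b := by
  simp [phi, Algebra.smul_def]

lemma phi_inj [Module.Flat A B] (I : Ideal A) (m : ℕ) :
    Function.Injective (phi (B := B) I m) := by
  have h := Module.Flat.rTensor_preserves_injective_linearMap
    (M := B) ((I ^ m : Ideal A).subtype) (Submodule.injective_subtype _)
  exact (TensorProduct.lid A B).injective.comp h

lemma phi_range (I : Ideal A) (m : ℕ) :
    LinearMap.range (phi (B := B) I m)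
      = Submodule.restrictScalars A ((I.map (algebraMap A B)) ^ m : Ideal B) := by
  apply le_antisymm
  · rintro _ ⟨t, rfl⟩
    induction t using TensorProduct.induction_on with
    | zero => simp
    | tmul x b => exact (by simpa using mem_restrict_pow_of_mem_pow I m x.1 x.2 b)
    | add s t hs ht => rw [map_add]; exact Submodule.add_mem _ hs ht
  · intro z hz
    have hz' : z ∈ Ideal.span ((algebraMap A B) '' (I ^ m : Ideal A)) := by
      have h2 : z ∈ (I ^ m : Ideal A).map (algebraMap A B) := by
        rwa [Submodule.restrictScalars_mem, ← Ideal.map_pow] at hz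
      exact h2
    clear hz
    induction hz' using Submodule.span_induction with
    | mem _ h =>
      obtain ⟨x, hx, rfl⟩ := h
      exact ⟨(⟨x, hx⟩ : ↥(I ^ m)) ⊗ₜ[A] 1, by simp⟩
    | zero => exact ⟨0, by simp⟩
    | add u v hu hv hpu hpv =>
      obtain ⟨s, rfl⟩ := hpu; obtain ⟨t, rfl⟩ := hpv
      exact ⟨s + t, by simp⟩
    | smul b u hu hpu =>
      obtain ⟨t, rfl⟩ := hpu
      clear hu
      induction t using TensorProduct.induction_on with
      | zero => exact ⟨0, by simp⟩
      | tmul x c =>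
        exact ⟨x ⊗ₜ[A] (b * c), by simp [smul_eq_mul]; ring⟩
      | add s t hs ht =>
        obtain ⟨s', hs'⟩ := hs
        obtain ⟨t', ht'⟩ := ht
        exact ⟨s' + t', by rw [map_add, hs', ht', map_add, smul_add]⟩

end Aux

/-- if B is a flat A-algebra and I ⊆ A is an ideal, then the natural
map (Iⁿ/Iⁿ⁺¹) ⊗_A B → (IB)ⁿ/(IB)ⁿ⁺¹, x ⊗ b ↦ class of (image of x)·b, is an
isomorphism for every n ≥ 0; consequently the associated graded ring of B with
respect to IB is the base change gr_I(A) ⊗_A B. -/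
theorem stmt_15 {A B : Type*} [CommRing A] [CommRing B] [Algebra A B]
    [Module.Flat A B] (I : Ideal A) (n : ℕ) :
    ∃ e : ((powQuot I n) ⊗[A] B) ≃ₗ[A] powQuotRS A (I.map (algebraMap A B)) n,
      ∀ (x : A) (hx : x ∈ I ^ n) (b : B),
        e ((Submodule.Quotient.mk ⟨x, hx⟩) ⊗ₜ[A] b) =
          Submodule.Quotient.mk
            ⟨algebraMap A B x * b, mem_restrict_pow_of_mem_pow I n x hx b⟩ := by
    classical
  set N : Submodule A ↥(I ^ n) :=
    Submodule.comap (I ^ n : Ideal A).subtype (I ^ (n + 1) : Ideal A) with hN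
  set Jn := Submodule.restrictScalars A ((I.map (algebraMap A B)) ^ n : Ideal B)
  set Jn1 := Submodule.restrictScalars A ((I.map (algebraMap A B)) ^ (n + 1) : Ideal B)
  -- the equivalence (I^n ⊗ B) ≃ Jn
  let g : (↥(I ^ n) ⊗[A] B) ≃ₗ[A] ↥Jn :=
    (LinearEquiv.ofInjective (phi (B := B) I n) (phi_inj I n)).trans
      (LinearEquiv.ofEq _ _ (phi_range I n))
  have hg : ∀ t, (g t).1 = phi (B := B) I n t := fun t => rfl
  have key1 : ∀ t : (↥N) ⊗[A] B,
      phi (B := B) I n (TensorProduct.map N.subtype LinearMap.id t) ∈ Jn1 := by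
    intro t
    induction t using TensorProduct.induction_on with
    | zero => simp
    | tmul x b => simpa [Jn1] using mem_restrict_pow_of_mem_pow I (n + 1) x.1.1 x.2 b
    | add s t hs ht => rw [map_add, map_add]; exact Submodule.add_mem _ hs ht
  -- the inclusion I^(n+1) → N
  let θ : ↥(I ^ (n + 1) : Ideal A) →ₗ[A] ↥N :=
    { toFun := fun x => ⟨⟨x.1, Ideal.pow_le_pow_right (by omega) x.2⟩, x.2⟩
      map_add' := by intros; rfl
      map_smul' := by intros; rfl }
  have key2 : ∀ t : (↥(I ^ (n + 1) : Ideal A)) ⊗[A] B,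
      phi (B := B) I n (TensorProduct.map N.subtype LinearMap.id
        (TensorProduct.map θ LinearMap.id t)) = phi (B := B) I (n + 1) t := by
    intro t
    induction t using TensorProduct.induction_on with
    | zero => simp
    | tmul x b => simp [θ]
    | add s t hs ht => rw [map_add, map_add, map_add, map_add, hs, ht]
  have hmap : Submodule.map g.toLinearMap (LinearMap.range
      (TensorProduct.map N.subtype (LinearMap.id : B →ₗ[A] B)))
      = Submodule.comap Jn.subtype Jn1 := by
    apply le_antisymm
    · rintro _ ⟨_, ⟨t, rfl⟩, rfl⟩
      simpa only [Submodule.mem_comap, LinearEquiv.coe_coe, Submodule.subtype_apply, hg] using key1 t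
    · rintro z hz
      have hz1 : z.1 ∈ LinearMap.range (phi (B := B) I (n + 1)) := by
        rw [phi_range]; exact hz
      obtain ⟨t, ht⟩ := hz1
      refine ⟨TensorProduct.map N.subtype LinearMap.id
        (TensorProduct.map θ LinearMap.id t), ⟨_, rfl⟩, ?_⟩
      apply Subtype.ext
      rw [LinearEquiv.coe_coe, hg, key2, ht]
  refine ⟨(TensorProduct.quotientTensorEquiv B N).trans
    (Submodule.Quotient.equiv _ _ g hmap), ?_⟩
  intro x hx b
  have : (g ((⟨x, hx⟩ : ↥(I ^ n)) ⊗ₜ[A] b))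
      = ⟨algebraMap A B x * b, mem_restrict_pow_of_mem_pow I n x hx b⟩ := by
    apply Subtype.ext; rw [hg]; simp
  simp only [LinearEquiv.trans_apply, TensorProduct.quotientTensorEquiv_apply_tmul_mk,
    Submodule.Quotient.equiv_apply]
  rw [Submodule.mapQ_apply]
  exact congrArg Submodule.Quotient.mk (by rw [LinearEquiv.coe_coe, this])
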